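/- Let x : I → (ℝ_{>0})² be differentiable with x₁' = x₁(a₁x₁ + b x₂) and x₂' = x₂(c x₁ + a₂ x₂), where a₁ ≠ c and a₂ ≠ b. Then P := (c − a₁)x₁ + (a₂ − b)x₂ satisfies P' = P·(a₁x₁ + a₂x₂), and the function t ↦ P(t)^{a₁a₂ − bc} · x₁(t)^{−a₂(a₁ − c)} · x₂(t)^{−a₁(a₂ − b)} is constant on I (an explicit first integral of the 2-dimensional tree-system). -/

import Mathlib

open Real

/-- Constancy from zero derivative on a convex set. -/
lemma my_const_of_deriv_zero {I : Set ℝ} (hI : Convex ℝ I) {f : ℝ → ℝ}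
    (hf : ∀ t ∈ I, HasDerivAt f 0 t) : ∀ t ∈ I, ∀ s ∈ I, f t = f s := by
  intro t ht s hs
  have h := Convex.norm_image_sub_le_of_norm_hasDerivWithin_le (f := f) (f' := fun _ => 0)
    (C := 0) (fun x hx => (hf x hx).hasDerivWithinAt) (fun x _ => by simp) hI hs ht
  rw [zero_mul] at h
  have := norm_nonneg (f t - f s)
  have : ‖f t - f s‖ = 0 := le_antisymm h this
  have := norm_eq_zero.mp this
  linarith [sub_eq_zero.mp this]

/-- `(x * A) ^ α = x ^ α * A ^ α` for positive `A` and arbitrary `x`. -/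
lemma my_mul_rpow {x A α : ℝ} (hA : 0 < A) : (x * A) ^ α = x ^ α * A ^ α := by
  rcases le_or_gt 0 x with h | h
  · exact Real.mul_rpow h hA.le
  · have hxA : x * A < 0 := mul_neg_of_neg_of_pos h hA
    rw [Real.rpow_def_of_neg hxA, Real.rpow_def_of_neg h, Real.rpow_def_of_pos hA,
      Real.log_mul (ne_of_lt h) (ne_of_gt hA), add_mul, Real.exp_add]
    ring

/-- Explicit first integral of the 2-dimensional tree-system: if `x₁, x₂ > 0` solve
`x₁' = x₁(a₁x₁ + b x₂)`, `x₂' = x₂(c x₁ + a₂x₂)` with `a₁ ≠ c`, `a₂ ≠ b`, then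
`P = (c − a₁)x₁ + (a₂ − b)x₂` satisfies `P' = P(a₁x₁ + a₂x₂)` and
`P^{a₁a₂ − bc} · x₁^{−a₂(a₁−c)} · x₂^{−a₁(a₂−b)}` is constant on `I`. -/
theorem two_dim_tree_system_integral {I : Set ℝ} (hI : I.OrdConnected)
    (a₁ a₂ b c : ℝ) (h₁ : a₁ ≠ c) (h₂ : a₂ ≠ b)
    (x₁ x₂ : ℝ → ℝ) (hpos₁ : ∀ t ∈ I, 0 < x₁ t) (hpos₂ : ∀ t ∈ I, 0 < x₂ t)
    (hx₁ : ∀ t ∈ I, HasDerivAt x₁ (x₁ t * (a₁ * x₁ t + b * x₂ t)) t)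
    (hx₂ : ∀ t ∈ I, HasDerivAt x₂ (x₂ t * (c * x₁ t + a₂ * x₂ t)) t) :
    (∀ t ∈ I, HasDerivAt (fun s => (c - a₁) * x₁ s + (a₂ - b) * x₂ s)
      (((c - a₁) * x₁ t + (a₂ - b) * x₂ t) * (a₁ * x₁ t + a₂ * x₂ t)) t) ∧
    (∀ t ∈ I, ∀ s ∈ I,
      ((c - a₁) * x₁ t + (a₂ - b) * x₂ t) ^ (a₁ * a₂ - b * c) *
        x₁ t ^ (-(a₂ * (a₁ - c))) * x₂ t ^ (-(a₁ * (a₂ - b)))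
      = ((c - a₁) * x₁ s + (a₂ - b) * x₂ s) ^ (a₁ * a₂ - b * c) *
        x₁ s ^ (-(a₂ * (a₁ - c))) * x₂ s ^ (-(a₁ * (a₂ - b)))) := by
  have hconv : Convex ℝ I := hI.convex
  set α : ℝ := a₁ * a₂ - b * c with hα
  set β : ℝ := -(a₂ * (a₁ - c)) with hβ
  set γ : ℝ := -(a₁ * (a₂ - b)) with hγ
  -- part 1
  have hP : ∀ t ∈ I, HasDerivAt (fun s => (c - a₁) * x₁ s + (a₂ - b) * x₂ s)
      (((c - a₁) * x₁ t + (a₂ - b) * x₂ t) * (a₁ * x₁ t + a₂ * x₂ t)) t := by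
    intro t ht
    have := ((hx₁ t ht).const_mul (c - a₁)).add ((hx₂ t ht).const_mul (a₂ - b))
    refine this.congr_deriv (Eq.symm ?_)
    ring
  refine ⟨hP, ?_⟩
  -- derivative of rpow of x₁ and x₂
  have hd₁ : ∀ (u : ℝ), ∀ t ∈ I, HasDerivAt (fun s => x₁ s ^ u)
      (u * x₁ t ^ u * (a₁ * x₁ t + b * x₂ t)) t := by
    intro u t ht
    have hx := hpos₁ t ht
    have := (hx₁ t ht).rpow_const (p := u) (Or.inl (ne_of_gt hx))
    convert this using 1
    rw [Real.rpow_sub_one (ne_of_gt hx)]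
    field_simp
  have hd₂ : ∀ (v : ℝ), ∀ t ∈ I, HasDerivAt (fun s => x₂ s ^ v)
      (v * x₂ t ^ v * (c * x₁ t + a₂ * x₂ t)) t := by
    intro v t ht
    have hx := hpos₂ t ht
    have := (hx₂ t ht).rpow_const (p := v) (Or.inl (ne_of_gt hx))
    convert this using 1
    rw [Real.rpow_sub_one (ne_of_gt hx)]
    field_simp
  rcases eq_or_ne α 0 with hα0 | hα0
  · -- α = 0: the P factor is 1, and x₁^β x₂^γ is constant
    have key : ∀ t ∈ I, ∀ s ∈ I, x₁ t ^ β * x₂ t ^ γ = x₁ s ^ β * x₂ s ^ γ := by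
      apply my_const_of_deriv_zero hconv
      intro t ht
      have := ((hd₁ β t ht).mul (hd₂ γ t ht))
      refine this.congr_deriv (Eq.symm ?_)
      have e1 : β * a₁ + γ * c = -a₁ * α := by rw [hβ, hγ, hα]; ring
      have e2 : β * b + γ * a₂ = -a₂ * α := by rw [hβ, hγ, hα]; ring
      have : β * (a₁ * x₁ t + b * x₂ t) + γ * (c * x₁ t + a₂ * x₂ t)
          = (β * a₁ + γ * c) * x₁ t + (β * b + γ * a₂) * x₂ t := by ring
      rw [eq_comm]
      calc β * x₁ t ^ β * (a₁ * x₁ t + b * x₂ t) * x₂ t ^ γ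
            + x₁ t ^ β * (γ * x₂ t ^ γ * (c * x₁ t + a₂ * x₂ t))
          = x₁ t ^ β * x₂ t ^ γ *
            ((β * a₁ + γ * c) * x₁ t + (β * b + γ * a₂) * x₂ t) := by ring
        _ = 0 := by rw [e1, e2, hα0]; ring
    intro t ht s hs
    rw [hα0, Real.rpow_zero, Real.rpow_zero, one_mul, one_mul]
    exact key t ht s hs
  · -- α ≠ 0: H = P * x₁^(β/α) * x₂^(γ/α) is constant; F = H ^ α
    set u : ℝ := β / α with hu
    set v : ℝ := γ / α with hv
    set P : ℝ → ℝ := fun s => (c - a₁) * x₁ s + (a₂ - b) * x₂ s with hPdef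
    have key : ∀ t ∈ I, ∀ s ∈ I,
        P t * (x₁ t ^ u * x₂ t ^ v) = P s * (x₁ s ^ u * x₂ s ^ v) := by
      apply my_const_of_deriv_zero hconv
      intro t ht
      have hder := (hP t ht).mul ((hd₁ u t ht).mul (hd₂ v t ht))
      refine hder.congr_deriv (Eq.symm ?_)
      have e1 : a₁ + u * a₁ + v * c = 0 := by
        rw [hu, hv, hβ, hγ]; field_simp; rw [hα]; ring
      have e2 : a₂ + u * b + v * a₂ = 0 := by
        rw [hu, hv, hβ, hγ]; field_simp; rw [hα]; ring
      rw [eq_comm]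
      calc P t * (a₁ * x₁ t + a₂ * x₂ t) * (x₁ t ^ u * x₂ t ^ v)
            + P t * (u * x₁ t ^ u * (a₁ * x₁ t + b * x₂ t) * x₂ t ^ v
              + x₁ t ^ u * (v * x₂ t ^ v * (c * x₁ t + a₂ * x₂ t)))
          = P t * (x₁ t ^ u * x₂ t ^ v) *
            ((a₁ + u * a₁ + v * c) * x₁ t + (a₂ + u * b + v * a₂) * x₂ t) := by ring
        _ = 0 := by rw [e1, e2]; ring
    intro t ht s hs
    have expand : ∀ r ∈ I, (P r * (x₁ r ^ u * x₂ r ^ v)) ^ α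
        = P r ^ α * x₁ r ^ β * x₂ r ^ γ := by
      intro r hr
      have hx1 := hpos₁ r hr
      have hx2 := hpos₂ r hr
      have hA : 0 < x₁ r ^ u * x₂ r ^ v :=
        mul_pos (Real.rpow_pos_of_pos hx1 u) (Real.rpow_pos_of_pos hx2 v)
      rw [my_mul_rpow hA, Real.mul_rpow (Real.rpow_pos_of_pos hx1 u).le
        (Real.rpow_pos_of_pos hx2 v).le]
      rw [← Real.rpow_mul hx1.le, ← Real.rpow_mul hx2.le, hu, hv,
        div_mul_cancel₀ _ hα0, div_mul_cancel₀ _ hα0]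
      ring
    have := congrArg (fun z => z ^ α) (key t ht s hs)
    rw [expand t ht, expand s hs] at this
    exact this
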